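/- Fix β ∈ (0,1) and bounded measurable h : [0,1] → [0,1] with M := sup_y h(y) ≤ 1. Suppose b̃ : [0,1] → [0,∞) satisfies b̃(x) ≤ (M/(1−β))·1{h(x) > 0} for all x with strict inequality at some point x₀ with h(x₀) > 0. Then there exist a valid p-value P and a [0,1]-valued random variable P^a (possibly dependent on P) such that E[h(P^a)·1{b̃(P^a)·P ≤ s}] > (1−β)s for some s ∈ [0,1]. -/

import Mathlib

open MeasureTheory Set ProbabilityTheory

/-- Admissibility of the general-dependence scaling `b(x) = (sup h)/(1-β) · 1{h(x)>0}`: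
any pointwise strictly smaller scaling violates the query-branch validity constraint for
some dependent pair `(P, P^a)`. -/
theorem active_pvalue_b_general_admissible
    (β : ℝ) (hβ : β ∈ Ioo (0:ℝ) 1)
    (h : ℝ → ℝ) (hhm : Measurable h) (hh01 : ∀ x ∈ Icc (0:ℝ) 1, h x ∈ Icc (0:ℝ) 1)
    (M : ℝ) (hM : M = ⨆ y : Icc (0:ℝ) 1, h y) (hM1 : M ≤ 1)
    (btil : ℝ → ℝ) (hbnn : ∀ x, 0 ≤ btil x)
    (hble : ∀ x ∈ Icc (0:ℝ) 1, btil x ≤ (M / (1 - β)) * (if 0 < h x then 1 else 0))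
    (x₀ : ℝ) (hx₀ : x₀ ∈ Icc (0:ℝ) 1) (hhx₀ : 0 < h x₀) (hstrict : btil x₀ < M / (1 - β)) :
    ∃ (Ω : Type) (m : MeasurableSpace Ω) (μ : Measure Ω), IsProbabilityMeasure μ ∧
      ∃ P Pa : Ω → ℝ, Measurable P ∧ Measurable Pa ∧
        (∀ s ∈ Icc (0:ℝ) 1, μ {ω | P ω ≤ s} ≤ ENNReal.ofReal s) ∧
        (∀ ω, Pa ω ∈ Icc (0:ℝ) 1) ∧
        ∃ s ∈ Icc (0:ℝ) 1,
          (1 - β) * s <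
            ∫ ω, h (Pa ω) * (if btil (Pa ω) * P ω ≤ s then (1:ℝ) else 0) ∂μ := by
  obtain ⟨hβ0, hβ1⟩ := hβ
  have hβ' : (0:ℝ) < 1 - β := by linarith
  set c : ℝ := M / (1 - β) with hc
  -- M is positive
  have hbdd : BddAbove (range fun y : Icc (0:ℝ) 1 => h y) := by
    refine ⟨1, ?_⟩
    rintro z ⟨⟨y, hy⟩, rfl⟩
    exact (hh01 y hy).2
  have hMx₀ : h x₀ ≤ M := by
    rw [hM]; exact le_ciSup hbdd ⟨x₀, hx₀⟩
  have hM0 : 0 < M := lt_of_lt_of_le hhx₀ hMx₀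
  have hc0 : 0 < c := div_pos hM0 hβ'
  set b₀ : ℝ := btil x₀ with hb₀
  have hb₀0 : 0 ≤ b₀ := hbnn x₀
  -- the common measure space
  refine ⟨ℝ, inferInstance, volume.restrict (Icc (0:ℝ) 1), ?_, ?_⟩
  · constructor
    simp [Measure.restrict_apply, Real.volume_Icc]
  have hvalid : ∀ s ∈ Icc (0:ℝ) 1,
      (volume.restrict (Icc (0:ℝ) 1)) {ω : ℝ | id ω ≤ s} ≤ ENNReal.ofReal s := by
    intro s hs
    have : {ω : ℝ | id ω ≤ s} = Iic s := rfl
    rw [this, Measure.restrict_apply measurableSet_Iic]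
    calc volume (Iic s ∩ Icc 0 1) ≤ volume (Icc 0 s) := by
          apply measure_mono
          rintro x ⟨hx1, hx2, _⟩
          exact ⟨hx2, hx1⟩
      _ = ENNReal.ofReal s := by rw [Real.volume_Icc, sub_zero]
  rcases eq_or_lt_of_le hb₀0 with hb0 | hb0
  · -- case b₀ = 0 : constant Pa = x₀, s = 0
    refine ⟨id, fun _ => x₀, measurable_id, measurable_const, hvalid, fun _ => hx₀, 0,
      ⟨le_refl 0, zero_le_one⟩, ?_⟩
    have : ∀ ω : ℝ, h x₀ * (if btil x₀ * id ω ≤ 0 then (1:ℝ) else 0) = h x₀ := by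
      intro ω
      rw [if_pos]
      · ring
      · rw [← hb₀, ← hb0]; simp
    simp only [this]
    rw [integral_const]
    have h1 : (volume.restrict (Icc (0:ℝ) 1)) univ = 1 := by
      simp [Measure.restrict_apply, Real.volume_Icc]
    rw [measureReal_def, Measure.restrict_apply_univ, Real.volume_Icc]
    norm_num
    linarith
  · -- case b₀ > 0
    -- pick x₁ with h x₁ close to M
    set δ : ℝ := h x₀ * (c / b₀ - 1) with hδ
    have hcb : b₀ < c := hstrict
    have hδ0 : 0 < δ := by
      apply mul_pos hhx₀
      have : (1:ℝ) < c / b₀ := (one_lt_div hb0).2 hcb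
      linarith
    set ε : ℝ := min δ M with hε
    have hε0 : 0 < ε := lt_min hδ0 hM0
    have hεM : ε ≤ M := min_le_right _ _
    have hεδ : ε ≤ δ := min_le_left _ _
    obtain ⟨⟨x₁, hx₁Icc⟩, hx₁⟩ : ∃ y : Icc (0:ℝ) 1, M - ε < h y := by
      apply exists_lt_of_lt_ciSup
      rw [← hM]; linarith
    have hhx₁ : 0 < h x₁ := by linarith
    have hb₁ : btil x₁ ≤ c := by
      have := hble x₁ hx₁Icc
      rwa [if_pos hhx₁, mul_one] at this
    -- parameters
    set s : ℝ := min b₀ 1 with hs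
    have hs0 : 0 < s := lt_min hb0 one_pos
    have hs1 : s ≤ 1 := min_le_right _ _
    have hsb : s ≤ b₀ := min_le_left _ _
    set t₁ : ℝ := s / c with ht₁
    set t₂ : ℝ := s / b₀ with ht₂
    have ht₁0 : 0 < t₁ := div_pos hs0 hc0
    have ht₂1 : t₂ ≤ 1 := by rw [ht₂, div_le_one hb0]; exact hsb
    have ht₁t₂ : t₁ < t₂ := by
      rw [ht₁, ht₂]
      exact div_lt_div_of_pos_left hs0 hb0 hcb
    have ht₁1 : t₁ ≤ 1 := le_trans (le_of_lt ht₁t₂) ht₂1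
    set Pa : ℝ → ℝ := fun ω => if ω ≤ t₁ then x₁ else x₀ with hPa
    have hPam : Measurable Pa := Measurable.ite measurableSet_Iic measurable_const measurable_const
    refine ⟨id, Pa, measurable_id, hPam, hvalid, ?_, s, ⟨le_of_lt hs0, hs1⟩, ?_⟩
    · intro ω; rw [hPa]; dsimp only; split_ifs; exacts [hx₁Icc, hx₀]
    -- the integral
    set g : ℝ → ℝ := fun ω => (Icc (0:ℝ) t₁).indicator (fun _ => h x₁) ω
        + (Ioc t₁ t₂).indicator (fun _ => h x₀) ω with hg
    have hae : (fun ω => h (Pa ω) * (if btil (Pa ω) * id ω ≤ s then (1:ℝ) else 0))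
        =ᶠ[ae (volume.restrict (Icc (0:ℝ) 1))] g := by
      filter_upwards [ae_restrict_mem measurableSet_Icc] with ω hω
      obtain ⟨hω0, hω1⟩ := hω
      rw [hPa, hg]
      dsimp only [id]
      by_cases h1 : ω ≤ t₁
      · simp only [if_pos h1]
        have hind : btil x₁ * ω ≤ s := by
          have h2 : btil x₁ * ω ≤ c * t₁ :=
            mul_le_mul hb₁ h1 hω0 (le_of_lt hc0)
          have h3 : c * t₁ = s := by
            rw [ht₁]; field_simp
          linarith
        rw [if_pos hind, indicator_of_mem (Set.mem_Icc.2 ⟨hω0, h1⟩), indicator_of_notMem]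
        · ring
        · rintro ⟨h4, _⟩; exact absurd h1 (not_le.2 h4)
      · simp only [if_neg h1]
        push_neg at h1
        by_cases h2 : ω ≤ t₂
        · have hind : btil x₀ * ω ≤ s := by
            have h3 : btil x₀ * ω ≤ b₀ * t₂ :=
              mul_le_mul (le_of_eq hb₀.symm) h2 hω0 hb₀0
            have h4 : b₀ * t₂ = s := by rw [ht₂]; field_simp
            linarith
          rw [if_pos hind, indicator_of_notMem, indicator_of_mem (Set.mem_Ioc.2 ⟨h1, h2⟩)]
          · ring
          · rintro ⟨_, h5⟩; exact absurd h1 (not_lt.2 h5)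
        · push_neg at h2
          have hind : ¬ (btil x₀ * ω ≤ s) := by
            push_neg
            have h4 : b₀ * t₂ = s := by rw [ht₂]; field_simp
            calc s = b₀ * t₂ := h4.symm
              _ < b₀ * ω := by exact (mul_lt_mul_iff_right₀ hb0).2 h2
              _ = btil x₀ * ω := by rw [hb₀]
          rw [if_neg hind, indicator_of_notMem, indicator_of_notMem]
          · ring
          · rintro ⟨_, h5⟩; exact absurd h2 (not_lt.2 h5)
          · rintro ⟨_, h5⟩; exact absurd (lt_trans ht₁t₂ h2) (not_lt.2 h5)
    rw [integral_congr_ae hae]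
    have hint : ∫ ω, g ω ∂(volume.restrict (Icc (0:ℝ) 1))
        = h x₁ * t₁ + h x₀ * (t₂ - t₁) := by
      rw [hg]
      rw [integral_add]
      · rw [integral_indicator_const _ measurableSet_Icc,
          integral_indicator_const _ measurableSet_Ioc]
        rw [measureReal_def, measureReal_def, Measure.restrict_apply measurableSet_Icc,
          Measure.restrict_apply measurableSet_Ioc]
        have e1 : Icc (0:ℝ) t₁ ∩ Icc 0 1 = Icc 0 t₁ := by
          apply inter_eq_left.2
          exact Icc_subset_Icc le_rfl ht₁1
        have e2 : Ioc t₁ t₂ ∩ Icc (0:ℝ) 1 = Ioc t₁ t₂ := by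
          apply inter_eq_left.2
          intro x hx
          exact ⟨le_trans (le_of_lt ht₁0) (le_of_lt hx.1), le_trans hx.2 ht₂1⟩
        rw [e1, e2, Real.volume_Icc, Real.volume_Ioc, sub_zero,
          ENNReal.toReal_ofReal (le_of_lt ht₁0),
          ENNReal.toReal_ofReal (by linarith : (0:ℝ) ≤ t₂ - t₁)]
        simp [mul_comm]
      · exact (integrable_const _).indicator measurableSet_Icc
      · exact (integrable_const _).indicator measurableSet_Ioc
    rw [hint]
    -- the key inequality
    have hkey : M < h x₁ + δ := by linarith
    have hMc : M = (1 - β) * c := by rw [hc]; field_simp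
    have hb0' : b₀ ≠ 0 := ne_of_gt hb0
    have hc0' : c ≠ 0 := ne_of_gt hc0
    have expand : h x₁ * t₁ + h x₀ * (t₂ - t₁)
        = (s / c) * (h x₁ + h x₀ * (c / b₀ - 1)) := by
      rw [ht₁, ht₂]; field_simp
    rw [expand, ← hδ]
    calc (1 - β) * s = (s / c) * M := by rw [hMc]; field_simp
      _ < (s / c) * (h x₁ + δ) := by
          apply mul_lt_mul_of_pos_left hkey (div_pos hs0 hc0)
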